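/- Let d = 1, let r ≥ 2 be a prime, and let N = 2(r−1). Let f : Δ_N → ℝ be an affine map on the standard N-simplex whose N+1 vertices are colored with 3 colors with color classes satisfying |C_0| = |C_1| = r−1 and |C_2| = 1, and suppose the N+1 image points f(v) of the vertices are in general position (pairwise distinct). Then T(f) ≥ ⌈(r−1)/2⌉! · ⌊(r−1)/2⌋!. -/

import Mathlib

open scoped Classical

/-- A set of points in `ℝ^d` is in *general position* if for every `j < d`,
no `j + 2` of the points lie on a common `j`-dimensional affine subspace. -/
def GenPos (d : ℕ) (P : Set (Fin d → ℝ)) : Prop :=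
  ∀ j < d, ∀ S : Finset (Fin d → ℝ), ↑S ⊆ P → S.card = j + 2 →
    ¬ ∃ A : AffineSubspace ℝ (Fin d → ℝ),
        Module.finrank ℝ A.direction = j ∧ (S : Set (Fin d → ℝ)) ⊆ (A : Set (Fin d → ℝ))

/-- `tverbergCount d N r f c` is the number of unordered colored Tverberg partitions for the
affine map `f` on the standard `N`-simplex (vertex `i` being `Pi.single i 1`), whose vertices
are colored by `c` with `d + 2` colors: partitions of the `N + 1` vertices into `r` rainbow
blocks whose images under `f` have intersecting convex hulls. -/
noncomputable def tverbergCount (d N r : ℕ) (f : (Fin (N + 1) → ℝ) →ᵃ[ℝ] (Fin d → ℝ))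
    (c : Fin (N + 1) → Fin (d + 2)) : ℕ :=
  Set.ncard { P : Finset (Finset (Fin (N + 1))) |
    P.card = r ∧
    (∀ B ∈ P, ∀ B' ∈ P, B ≠ B' → Disjoint B B') ∧
    P.biUnion id = Finset.univ ∧
    (∀ B ∈ P, ∀ j : Fin (d + 2), (B.filter fun i => c i = j).card ≤ 1) ∧
    ∃ x : Fin d → ℝ, ∀ B ∈ P,
      x ∈ convexHull ℝ ((fun i => f (Pi.single i 1)) '' (B : Set (Fin (N + 1)))) }

/-- Balancing inequality for factorials: `a!·b!` with `a + b = k` is minimized at the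
middle. -/
lemma factorial_mul_factorial_balanced (a b k : ℕ) (h : a + b = k) :
    Nat.factorial ((k+1)/2) * Nat.factorial (k/2) ≤ Nat.factorial a * Nat.factorial b := by
  have ha : a ≤ k := by omega
  have hb : b = k - a := by omega
  have hk2 : k / 2 ≤ k := Nat.div_le_self k 2
  have h1 := Nat.choose_mul_factorial_mul_factorial ha
  have h2 := Nat.choose_mul_factorial_mul_factorial hk2
  have h3 : k - k/2 = (k+1)/2 := by omega
  rw [h3] at h2
  have h4 : k.choose a ≤ k.choose (k/2) := Nat.choose_le_middle a k
  have hpos : 0 < k.choose a := Nat.choose_pos ha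
  subst hb
  have key : Nat.factorial ((k+1)/2) * Nat.factorial (k/2) * k.choose a
      ≤ Nat.factorial a * Nat.factorial (k - a) * k.choose a := by
    calc Nat.factorial ((k+1)/2) * Nat.factorial (k/2) * k.choose a
        ≤ Nat.factorial ((k+1)/2) * Nat.factorial (k/2) * k.choose (k/2) :=
          Nat.mul_le_mul_left _ h4
      _ = Nat.factorial k := by rw [← h2]; ring
      _ = Nat.factorial a * Nat.factorial (k-a) * k.choose a := by rw [← h1]; ring
  exact Nat.le_of_mul_le_mul_right key hpos

set_option maxHeartbeats 1000000 in
theorem tverbergCount_lower_bound_dim_one (r N : ℕ) (hr : 2 ≤ r)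
    (hrp : Nat.Prime r) (hN : N = 2 * (r - 1))
    (f : (Fin (N + 1) → ℝ) →ᵃ[ℝ] (Fin 1 → ℝ))
    (c : Fin (N + 1) → Fin 3)
    (hc : ∀ j : Fin 3,
      (Finset.univ.filter fun i => c i = j).card = if (j : ℕ) = 2 then 1 else r - 1)
    (hinj : Function.Injective fun i : Fin (N + 1) => f (Pi.single i 1))
    (hgen : GenPos 1 (Set.range fun i : Fin (N + 1) => f (Pi.single i 1))) :
    Nat.factorial ((r - 1 + 1) / 2) * Nat.factorial ((r - 1) / 2) ≤
      tverbergCount 1 N r f c := by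
  classical
  set k := r - 1 with hkdef
  have hk1 : 1 ≤ k := by omega
  have hrk : r = k + 1 := by omega
  have hNk : N + 1 = 2 * k + 1 := by omega
  have h3 : ∀ x : Fin 3, x = 0 ∨ x = 1 ∨ x = 2 := by decide
  set g : Fin (N+1) → ℝ := fun i => f (Pi.single i 1) 0 with hgdef
  have hginj : Function.Injective g := by
    intro i j hij
    apply hinj
    funext x
    have hx : x = 0 := Subsingleton.elim x 0
    simpa [hx] using hij
  set σ : Equiv.Perm (Fin (N+1)) := Tuple.sort g with hσdef
  have hsm : StrictMono (g ∘ σ) :=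
    (Tuple.monotone_sort g).strictMono_of_injective (hginj.comp σ.injective)
  set mIdx : Fin (N+1) := ⟨k, by omega⟩ with hmIdx
  set m : Fin (N+1) := σ mIdx with hmdef
  set L : Finset (Fin (N+1)) := Finset.univ.filter (fun v => g v < g m) with hLdef
  set R : Finset (Fin (N+1)) := Finset.univ.filter (fun v => g m < g v) with hRdef
  have hgL : ∀ v ∈ L, g v < g m := by
    intro v hv; exact (Finset.mem_filter.mp hv).2
  have hgR : ∀ v ∈ R, g m < g v := by
    intro v hv; exact (Finset.mem_filter.mp hv).2
  have hLcard : L.card = k := by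
    have himg : L = (Finset.Iio mIdx).image σ := by
      ext v
      simp only [hLdef, Finset.mem_filter, Finset.mem_univ, true_and, Finset.mem_image,
        Finset.mem_Iio]
      constructor
      · intro hv
        refine ⟨σ.symm v, ?_, σ.apply_symm_apply v⟩
        have : g (σ (σ.symm v)) < g (σ mIdx) := by rwa [σ.apply_symm_apply]
        exact hsm.lt_iff_lt.mp this
      · rintro ⟨j, hj, rfl⟩
        exact hsm hj
    rw [himg, Finset.card_image_of_injective _ σ.injective, Fin.card_Iio]
  have hmL : m ∉ L := by simp [hLdef]
  have hmR : m ∉ R := by simp [hRdef]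
  have htri : ∀ v : Fin (N+1), v ∈ L ∨ v = m ∨ v ∈ R := by
    intro v
    rcases lt_trichotomy (g v) (g m) with h | h | h
    · exact Or.inl (by simp [hLdef, h])
    · exact Or.inr (Or.inl (hginj h))
    · exact Or.inr (Or.inr (by simp [hRdef, h]))
  have hLR : Disjoint L R := by
    rw [Finset.disjoint_left]
    intro v hvL hvR
    exact absurd ((hgL v hvL).trans (hgR v hvR)) (lt_irrefl _)
  have hU : Finset.univ = L ∪ insert m R := by
    ext v
    simp only [Finset.mem_univ, true_iff, Finset.mem_union, Finset.mem_insert]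
    rcases htri v with h | h | h
    · exact Or.inl h
    · exact Or.inr (Or.inl h)
    · exact Or.inr (Or.inr h)
  have hLmR : Disjoint L (insert m R) := by
    rw [Finset.disjoint_left]
    intro v hvL hv
    rcases Finset.mem_insert.mp hv with rfl | hvR
    · exact hmL hvL
    · exact (Finset.disjoint_left.mp hLR) hvL hvR
  have hRcard : R.card = k := by
    have h1 : (Finset.univ : Finset (Fin (N+1))).card = N + 1 := by simp
    rw [hU, Finset.card_union_of_disjoint hLmR, Finset.card_insert_of_notMem hmR, hLcard] at h1
    omega
  -- color counts
  set a : Fin 3 → ℕ := fun j => (L.filter (fun i => c i = j)).card with hadef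
  set b : Fin 3 → ℕ := fun j => (R.filter (fun i => c i = j)).card with hbdef
  have hab : ∀ j : Fin 3, a j + b j + (if c m = j then 1 else 0)
      = if (j : ℕ) = 2 then 1 else k := by
    intro j
    have hcj := hc j
    rw [hU, Finset.filter_union, Finset.card_union_of_disjoint
      (Finset.disjoint_filter_filter hLmR), Finset.filter_insert] at hcj
    by_cases h : c m = j
    · rw [if_pos h, Finset.card_insert_of_notMem (by simp [hmR])] at hcj
      rw [if_pos h]
      simp only [hadef, hbdef]
      omega
    · rw [if_neg h] at hcj
      rw [if_neg h]
      simp only [hadef, hbdef]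
      omega
  have hsum : ∀ S : Finset (Fin (N+1)),
      (S.filter (fun i => c i = 0)).card + (S.filter (fun i => c i = 1)).card
        + (S.filter (fun i => c i = 2)).card = S.card := by
    intro S
    have h1 := Finset.card_filter_add_card_filter_not (s := S)
      (p := fun i => c i = 0)
    have h2 := Finset.card_filter_add_card_filter_not
      (s := S.filter (fun i => ¬ c i = 0)) (p := fun i => c i = 1)
    rw [Finset.filter_filter, Finset.filter_filter] at h2
    have e1 : S.filter (fun i => ¬ c i = 0 ∧ c i = 1) = S.filter (fun i => c i = 1) := by
      apply Finset.filter_congr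
      intro v _
      rcases h3 (c v) with h | h | h <;> simp [h]
    have e2 : S.filter (fun i => ¬ c i = 0 ∧ ¬ c i = 1) = S.filter (fun i => c i = 2) := by
      apply Finset.filter_congr
      intro v _
      rcases h3 (c v) with h | h | h <;> simp [h]
    rw [e1, e2] at h2
    omega
  have hsumL : a 0 + a 1 + a 2 = k := by rw [hadef]; simp only; rw [hsum L, hLcard]
  have hsumR : b 0 + b 1 + b 2 = k := by rw [hbdef]; simp only; rw [hsum R, hRcard]
  have hc2 : (Finset.univ.filter fun i => c i = (2 : Fin 3)).card = 1 := by
    have := hc 2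
    norm_num at this
    exact this
  -- the two halves of the matching
  set A : Finset (Fin (N+1)) :=
    L.filter (fun v => c v = 0 ∨ (c v = 2 ∧ c m = 0)) with hAdef
  set B : Finset (Fin (N+1)) :=
    R.filter (fun v => c v = 1 ∨ (c v = 2 ∧ c m = 1)) with hBdef
  set A' : Finset (Fin (N+1)) := L \ A with hA'def
  set B' : Finset (Fin (N+1)) := R \ B with hB'def
  have hcardor : ∀ (S : Finset (Fin (N+1))) (j j' : Fin 3) (d : Fin 3), j ≠ j' →
      (S.filter (fun v => c v = j ∨ (c v = j' ∧ c m = d))).card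
      = (S.filter (fun i => c i = j)).card
        + (if c m = d then (S.filter (fun i => c i = j')).card else 0) := by
    intro S j j' d hjj'
    by_cases hd : c m = d
    · rw [if_pos hd]
      have hEq : S.filter (fun v => c v = j ∨ (c v = j' ∧ c m = d))
          = S.filter (fun i => c i = j) ∪ S.filter (fun i => c i = j') := by
        rw [← Finset.filter_or]
        apply Finset.filter_congr
        intro v _
        simp [hd]
      rw [hEq, Finset.card_union_of_disjoint]
      rw [Finset.disjoint_left]
      intro v hv hv'
      simp only [Finset.mem_filter] at hv hv'
      exact hjj' (hv.2 ▸ hv'.2 ▸ rfl)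
    · rw [if_neg hd]
      congr 1
      apply Finset.filter_congr
      intro v _
      simp [hd]
  have hAcard : A.card = a 0 + (if c m = 0 then a 2 else 0) := by
    rw [hAdef, hcardor L 0 2 0 (by decide), hadef]
  have hBcard : B.card = b 1 + (if c m = 1 then b 2 else 0) := by
    rw [hBdef, hcardor R 1 2 1 (by decide), hbdef]
  have hABcard : A.card = B.card := by
    rcases h3 (c m) with hcm | hcm | hcm <;>
      [ (have h0 := hab 0; have h1 := hab 1; have h2 := hab 2;
         rw [if_pos hcm] at h0;
         rw [if_neg (by rw [hcm]; decide)] at h1;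
         rw [if_neg (by rw [hcm]; decide)] at h2;
         norm_num at h0 h1 h2;
         rw [hAcard, hBcard, if_pos hcm, if_neg (by rw [hcm]; decide)];
         omega);
        (have h0 := hab 0; have h1 := hab 1; have h2 := hab 2;
         rw [if_neg (by rw [hcm]; decide)] at h0;
         rw [if_pos hcm] at h1;
         rw [if_neg (by rw [hcm]; decide)] at h2;
         norm_num at h0 h1 h2;
         rw [hAcard, hBcard, if_neg (by rw [hcm]; decide), if_pos hcm];
         omega);
        (have h0 := hab 0; have h1 := hab 1; have h2 := hab 2;
         rw [if_neg (by rw [hcm]; decide)] at h0;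
         rw [if_neg (by rw [hcm]; decide)] at h1;
         rw [if_pos hcm] at h2;
         norm_num at h0 h1 h2;
         rw [hAcard, hBcard, if_neg (by rw [hcm]; decide), if_neg (by rw [hcm]; decide)];
         omega)]
  have hAL : A ⊆ L := Finset.filter_subset _ _
  have hBR : B ⊆ R := Finset.filter_subset _ _
  have hA'L : A' ⊆ L := Finset.sdiff_subset
  have hB'R : B' ⊆ R := Finset.sdiff_subset
  have hA'card : A'.card = k - A.card := by rw [hA'def, Finset.card_sdiff_of_subset hAL, hLcard]
  have hB'card : B'.card = k - B.card := by rw [hB'def, Finset.card_sdiff_of_subset hBR, hRcard]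
  have hAk : A.card ≤ k := hLcard ▸ Finset.card_le_card hAL
  have hA'B' : A'.card = B'.card := by rw [hA'card, hB'card, hABcard]
  -- the family of matchings
  set ρ : ((↥A ≃ ↥B) × (↥A' ≃ ↥B')) → Fin (N+1) → Fin (N+1) := fun p v =>
    if h : v ∈ A then (p.1 ⟨v, h⟩ : Fin (N+1))
    else if h' : v ∈ A' then (p.2 ⟨v, h'⟩ : Fin (N+1)) else v with hρdef
  have hρA : ∀ p v (h : v ∈ A), ρ p v = ↑(p.1 ⟨v, h⟩) := by
    intro p v h; simp [hρdef, h]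
  have hρA' : ∀ p v (h' : v ∈ A'), ρ p v = ↑(p.2 ⟨v, h'⟩) := by
    intro p v h'
    have hvA : v ∉ A := (Finset.mem_sdiff.mp h').2
    simp [hρdef, hvA, h']
  have hLAA' : ∀ v ∈ L, v ∈ A ∨ v ∈ A' := by
    intro v hv
    by_cases h : v ∈ A
    · exact Or.inl h
    · exact Or.inr (Finset.mem_sdiff.mpr ⟨hv, h⟩)
  have hρB : ∀ p v (h : v ∈ A), ρ p v ∈ B := by
    intro p v h; rw [hρA p v h]; exact (p.1 ⟨v, h⟩).2
  have hρB' : ∀ p v (h : v ∈ A'), ρ p v ∈ B' := by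
    intro p v h; rw [hρA' p v h]; exact (p.2 ⟨v, h⟩).2
  have hρR : ∀ p v, v ∈ L → ρ p v ∈ R := by
    intro p v hv
    rcases hLAA' v hv with h | h
    · exact hBR (hρB p v h)
    · exact hB'R (hρB' p v h)
  have hρinj : ∀ p, ∀ v1 ∈ L, ∀ v2 ∈ L, ρ p v1 = ρ p v2 → v1 = v2 := by
    intro p v1 h1 v2 h2 hEq
    rcases hLAA' v1 h1 with ha1 | ha1 <;> rcases hLAA' v2 h2 with ha2 | ha2
    · rw [hρA p v1 ha1, hρA p v2 ha2] at hEq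
      have := p.1.injective (Subtype.ext hEq)
      exact congrArg Subtype.val this
    · exfalso
      have hB1 := hρB p v1 ha1
      have hB2 := hρB' p v2 ha2
      rw [hEq] at hB1
      exact (Finset.mem_sdiff.mp hB2).2 hB1
    · exfalso
      have hB1 := hρB' p v1 ha1
      have hB2 := hρB p v2 ha2
      rw [hEq] at hB1
      exact (Finset.mem_sdiff.mp hB1).2 hB2
    · rw [hρA' p v1 ha1, hρA' p v2 ha2] at hEq
      have := p.2.injective (Subtype.ext hEq)
      exact congrArg Subtype.val this
  have himg : ∀ p, L.image (ρ p) = R := by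
    intro p
    apply Finset.eq_of_subset_of_card_le
    · intro v hv
      obtain ⟨l, hl, rfl⟩ := Finset.mem_image.mp hv
      exact hρR p l hl
    · rw [Finset.card_image_of_injOn (fun v1 h1 v2 h2 => hρinj p v1 h1 v2 h2),
        hLcard, hRcard]
  have hproper : ∀ p v, v ∈ L → c v ≠ c (ρ p v) := by
    intro p v hv heq
    have hvR : ρ p v ∈ R := hρR p v hv
    have hne : v ≠ ρ p v := by
      intro h
      exact (Finset.disjoint_left.mp hLR) hv (h ▸ hvR)
    have h22 : c v = 2 ∧ c (ρ p v) = 2 := by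
      rcases hLAA' v hv with h | h
      · have hvP := (Finset.mem_filter.mp h).2
        have hρP := (Finset.mem_filter.mp (hρB p v h)).2
        rcases hvP with h0 | ⟨h2, _⟩ <;> rcases hρP with h1 | ⟨h2', _⟩
        · rw [h0, h1] at heq; exact absurd heq (by decide)
        · rw [h0, h2'] at heq; exact absurd heq (by decide)
        · rw [h2, h1] at heq; exact absurd heq (by decide)
        · exact ⟨h2, h2'⟩
      · have hvP := (Finset.mem_filter.mp (Finset.mem_sdiff.mp h).1 ).1
        have hvnot : ¬ (c v = 0 ∨ (c v = 2 ∧ c m = 0)) := by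
          intro hcontra
          exact (Finset.mem_sdiff.mp h).2
            (Finset.mem_filter.mpr ⟨(Finset.mem_sdiff.mp h).1, hcontra⟩)
        have hρmem := hρB' p v h
        have hρnot : ¬ (c (ρ p v) = 1 ∨ (c (ρ p v) = 2 ∧ c m = 1)) := by
          intro hcontra
          exact (Finset.mem_sdiff.mp hρmem).2
            (Finset.mem_filter.mpr ⟨(Finset.mem_sdiff.mp hρmem).1, hcontra⟩)
        have hv0 : c v ≠ 0 := fun h' => hvnot (Or.inl h')
        have hρ1 : c (ρ p v) ≠ 1 := fun h' => hρnot (Or.inl h')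
        have hv1 : c v ≠ 1 := fun h' => hρ1 (heq ▸ h')
        have hv2 : c v = 2 := by rcases h3 (c v) with h' | h' | h' <;> tauto
        exact ⟨hv2, heq ▸ hv2⟩
    -- two distinct vertices of color 2 contradict |C₂| = 1
    have hsub : ({v, ρ p v} : Finset (Fin (N+1))) ⊆
        Finset.univ.filter (fun i => c i = (2:Fin 3)) := by
      intro x hx
      rcases Finset.mem_insert.mp hx with rfl | hx
      · exact Finset.mem_filter.mpr ⟨Finset.mem_univ _, h22.1⟩
      · rw [Finset.mem_singleton.mp hx]
        exact Finset.mem_filter.mpr ⟨Finset.mem_univ _, h22.2⟩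
    have := Finset.card_le_card hsub
    rw [hc2, Finset.card_pair hne] at this
    omega
  -- the map into partitions
  set Φ : ((↥A ≃ ↥B) × (↥A' ≃ ↥B')) → Finset (Finset (Fin (N+1))) := fun p =>
    insert {m} (L.image (fun l => {l, ρ p l})) with hΦdef
  have hchar : ∀ p X, X ∈ Φ p → X = {m} ∨ ∃ l ∈ L, X = {l, ρ p l} := by
    intro p X hX
    rcases Finset.mem_insert.mp hX with h | h
    · exact Or.inl h
    · obtain ⟨l, hl, rfl⟩ := Finset.mem_image.mp h
      exact Or.inr ⟨l, hl, rfl⟩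
  have hpairinj : ∀ p, ∀ l1 ∈ L, ∀ l2 ∈ L,
      ({l1, ρ p l1} : Finset (Fin (N+1))) = {l2, ρ p l2} → l1 = l2 := by
    intro p l1 h1 l2 h2 hEq
    have : l1 ∈ ({l2, ρ p l2} : Finset (Fin (N+1))) := by
      rw [← hEq]; exact Finset.mem_insert_self _ _
    rcases Finset.mem_insert.mp this with h | h
    · exact h
    · exfalso
      rw [Finset.mem_singleton.mp h] at h1
      exact (Finset.disjoint_left.mp hLR) h1 (hρR p l2 h2)
  have hmnotimg : ∀ p, ({m} : Finset (Fin (N+1))) ∉ L.image (fun l => {l, ρ p l}) := by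
    intro p hmem
    obtain ⟨l, hl, hEq⟩ := Finset.mem_image.mp hmem
    have : l ∈ ({m} : Finset (Fin (N+1))) := by
      rw [← hEq]; exact Finset.mem_insert_self _ _
    rw [Finset.mem_singleton.mp this] at hl
    exact hmL hl
  -- Φ p is a valid colored Tverberg partition
  have hΦmem : ∀ p, (Φ p).card = r ∧
      (∀ X ∈ Φ p, ∀ Y ∈ Φ p, X ≠ Y → Disjoint X Y) ∧
      (Φ p).biUnion id = Finset.univ ∧
      (∀ X ∈ Φ p, ∀ j : Fin 3, (X.filter fun i => c i = j).card ≤ 1) ∧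
      ∃ x : Fin 1 → ℝ, ∀ X ∈ Φ p,
        x ∈ convexHull ℝ ((fun i => f (Pi.single i 1)) '' (X : Set (Fin (N+1)))) := by
    intro p
    refine ⟨?_, ?_, ?_, ?_, ?_⟩
    · -- cardinality
      rw [hΦdef]
      simp only
      rw [Finset.card_insert_of_notMem (hmnotimg p),
        Finset.card_image_of_injOn (fun l1 h1 l2 h2 => hpairinj p l1 h1 l2 h2), hLcard]
      omega
    · -- pairwise disjoint
      intro X hX Y hY hXY
      rcases hchar p X hX with rfl | ⟨l1, hl1, rfl⟩ <;>
        rcases hchar p Y hY with rfl | ⟨l2, hl2, rfl⟩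
      · exact absurd rfl hXY
      · rw [Finset.disjoint_left]
        intro x hx
        rw [Finset.mem_singleton.mp hx]
        intro hmem
        rcases Finset.mem_insert.mp hmem with h | h
        · exact hmL (h ▸ hl2)
        · exact hmR (Finset.mem_singleton.mp h ▸ hρR p l2 hl2)
      · rw [Finset.disjoint_right]
        intro x hx
        rw [Finset.mem_singleton.mp hx]
        intro hmem
        rcases Finset.mem_insert.mp hmem with h | h
        · exact hmL (h ▸ hl1)
        · exact hmR (Finset.mem_singleton.mp h ▸ hρR p l1 hl1)
      · have hll : l1 ≠ l2 := fun h => hXY (by rw [h])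
        have hρρ : ρ p l1 ≠ ρ p l2 := fun h => hll (hρinj p l1 hl1 l2 hl2 h)
        have hlρ : l1 ≠ ρ p l2 := by
          intro h
          exact (Finset.disjoint_left.mp hLR) hl1 (h ▸ hρR p l2 hl2)
        have hρl : ρ p l1 ≠ l2 := by
          intro h
          exact (Finset.disjoint_left.mp hLR) hl2 (h ▸ hρR p l1 hl1)
        rw [Finset.disjoint_left]
        intro x hx hx'
        rcases Finset.mem_insert.mp hx with rfl | hx
        · rcases Finset.mem_insert.mp hx' with h' | h'
          · exact hll h'
          · exact hlρ (Finset.mem_singleton.mp h')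
        · have hx1 := Finset.mem_singleton.mp hx
          subst hx1
          rcases Finset.mem_insert.mp hx' with h' | h'
          · exact hρl h'
          · exact hρρ (Finset.mem_singleton.mp h')
    · -- union is everything
      apply Finset.eq_univ_of_forall
      intro v
      rw [Finset.mem_biUnion]
      rcases htri v with h | h | h
      · exact ⟨{v, ρ p v}, Finset.mem_insert_of_mem (Finset.mem_image_of_mem _ h),
          Finset.mem_insert_self _ _⟩
      · exact ⟨{m}, Finset.mem_insert_self _ _, by simp [h]⟩
      · have : v ∈ L.image (ρ p) := by rw [himg p]; exact h
        obtain ⟨l, hl, rfl⟩ := Finset.mem_image.mp this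
        exact ⟨{l, ρ p l}, Finset.mem_insert_of_mem (Finset.mem_image_of_mem _ hl),
          Finset.mem_insert_of_mem (Finset.mem_singleton_self _)⟩
    · -- rainbow
      intro X hX j
      rcases hchar p X hX with rfl | ⟨l, hl, rfl⟩
      · calc (Finset.filter (fun i => c i = j) {m}).card ≤ ({m} : Finset _).card :=
            Finset.card_filter_le _ _
          _ = 1 := Finset.card_singleton m
      · by_contra hcon
        push_neg at hcon
        obtain ⟨x, hx, y, hy, hxy⟩ := Finset.one_lt_card.mp hcon
        have hx' := Finset.mem_filter.mp hx
        have hy' := Finset.mem_filter.mp hy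
        have hcl : c l ≠ c (ρ p l) := hproper p l hl
        have hx2 := Finset.mem_insert.mp hx'.1
        have hy2 := Finset.mem_insert.mp hy'.1
        rcases hx2 with hx2 | hx2 <;> rcases hy2 with hy2 | hy2
        · rw [hx2, hy2] at hxy; exact hxy rfl
        · rw [Finset.mem_singleton] at hy2
          rw [hx2] at hx'
          rw [hy2] at hy'
          exact hcl (hx'.2.trans hy'.2.symm)
        · rw [Finset.mem_singleton] at hx2
          rw [hx2] at hx'
          rw [hy2] at hy'
          exact hcl (hy'.2.trans hx'.2.symm)
        · rw [Finset.mem_singleton] at hx2 hy2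
          rw [hx2, hy2] at hxy
          exact hxy rfl
    · -- common point
      refine ⟨f (Pi.single m 1), ?_⟩
      intro X hX
      rcases hchar p X hX with rfl | ⟨l, hl, rfl⟩
      · simp only [Finset.coe_singleton, Set.image_singleton]
        exact subset_convexHull ℝ _ (Set.mem_singleton _)
      · have himg2 : (fun i => f (Pi.single i 1)) '' (({l, ρ p l} : Finset (Fin (N+1))) :
            Set (Fin (N+1))) = {f (Pi.single l 1), f (Pi.single (ρ p l) 1)} := by
          rw [Finset.coe_insert, Finset.coe_singleton, Set.image_insert_eq,
            Set.image_singleton]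
        rw [himg2, convexHull_pair]
        have hgl : g l < g m := hgL l hl
        have hgr : g m < g (ρ p l) := hgR _ (hρR p l hl)
        have hden : g (ρ p l) - g l > 0 := by linarith
        refine ⟨(g (ρ p l) - g m) / (g (ρ p l) - g l),
          (g m - g l) / (g (ρ p l) - g l), ?_, ?_, ?_, ?_⟩
        · apply div_nonneg <;> linarith
        · apply div_nonneg <;> linarith
        · rw [← add_div]
          have hnum : g (ρ p l) - g m + (g m - g l) = g (ρ p l) - g l := by ring
          rw [hnum, div_self (ne_of_gt hden)]
        · funext x
          have hx : x = 0 := Subsingleton.elim x 0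
          subst hx
          simp only [Pi.add_apply, Pi.smul_apply, smul_eq_mul]
          have h1 : f (Pi.single l 1) 0 = g l := rfl
          have h2 : f (Pi.single (ρ p l) 1) 0 = g (ρ p l) := rfl
          have h3' : f (Pi.single m 1) 0 = g m := rfl
          rw [h1, h2, h3']
          field_simp
          ring
  -- injectivity of Φ
  have hΦinj : Function.Injective Φ := by
    intro p q hpq
    have key : ∀ v ∈ L, ρ p v = ρ q v := by
      intro v hv
      have h1 : ({v, ρ p v} : Finset (Fin (N+1))) ∈ Φ q := by
        rw [← hpq]
        exact Finset.mem_insert_of_mem (Finset.mem_image_of_mem _ hv)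
      rcases hchar q _ h1 with h | ⟨l, hl, hEq⟩
      · exfalso
        have : v ∈ ({m} : Finset (Fin (N+1))) := by
          rw [← h]; exact Finset.mem_insert_self _ _
        rw [Finset.mem_singleton.mp this] at hv
        exact hmL hv
      · have hvmem : v ∈ ({l, ρ q l} : Finset (Fin (N+1))) := by
          rw [← hEq]; exact Finset.mem_insert_self _ _
        rcases Finset.mem_insert.mp hvmem with rfl | hvm
        · have hmem2 : ρ p v ∈ ({v, ρ q v} : Finset (Fin (N+1))) := by
            rw [← hEq]
            exact Finset.mem_insert_of_mem (Finset.mem_singleton_self _)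
          rcases Finset.mem_insert.mp hmem2 with h' | h'
          · exfalso
            exact (Finset.disjoint_left.mp hLR) hv (h' ▸ hρR p v hv)
          · exact Finset.mem_singleton.mp h'
        · exfalso
          rw [Finset.mem_singleton.mp hvm] at hv
          exact (Finset.disjoint_left.mp hLR) hv (hρR q l hl)
    have h1 : p.1 = q.1 := by
      apply Equiv.ext
      intro x
      apply Subtype.ext
      have hx : (x : Fin (N+1)) ∈ A := x.2
      have hk' := key x (hAL hx)
      rw [hρA p _ hx, hρA q _ hx] at hk'
      simpa using hk'
    have h2 : p.2 = q.2 := by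
      apply Equiv.ext
      intro x
      apply Subtype.ext
      have hx : (x : Fin (N+1)) ∈ A' := x.2
      have hk' := key x (hA'L hx)
      rw [hρA' p _ hx, hρA' q _ hx] at hk'
      simpa using hk'
    exact Prod.ext h1 h2
  -- conclude by counting
  have e0 : ↥A ≃ ↥B := Fintype.equivOfCardEq (by simp [Fintype.card_coe, hABcard])
  have e0' : ↥A' ≃ ↥B' := Fintype.equivOfCardEq (by simp [Fintype.card_coe, hA'B'])
  have hDcard : Fintype.card ((↥A ≃ ↥B) × (↥A' ≃ ↥B'))
      = Nat.factorial A.card * Nat.factorial A'.card := by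
    rw [Fintype.card_prod, Fintype.card_equiv e0, Fintype.card_equiv e0',
      Fintype.card_coe, Fintype.card_coe]
  rw [tverbergCount]
  calc Nat.factorial ((k + 1) / 2) * Nat.factorial (k / 2)
      ≤ Nat.factorial A.card * Nat.factorial A'.card :=
        factorial_mul_factorial_balanced _ _ _ (by omega)
    _ = Nat.card ((↥A ≃ ↥B) × (↥A' ≃ ↥B')) := by
        rw [Nat.card_eq_fintype_card, hDcard]
    _ = Nat.card (Set.range Φ) := (Nat.card_range_of_injective hΦinj).symm
    _ = (Set.range Φ).ncard := (Nat.card_coe_set_eq _)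
    _ ≤ _ := by
        apply Set.ncard_le_ncard _ (Set.toFinite _)
        rintro P ⟨p, rfl⟩
        exact hΦmem p
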